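/- Fix a real α with 0 < α < 1 and a real τ > 0. With I_d(t) = ∫_1^d k^{−α}(1 − k^{−α})^t dk and H_{d,α} = Σ_{k=1}^d k^{−α}, one has lim_{d→∞} I_d(τ·d^α) / H_{d,α} = ((1−α)/α) · τ^{(1/α)−1} · ∫_τ^∞ z^{−1/α} e^{−z} dz. -/

import Mathlib

open Filter MeasureTheory Set Real Topology

lemma cov (α τ : ℝ) (hα0 : 0 < α) (hα1 : α < 1) (hτ : 0 < τ) (t : ℝ) (ht : τ ≤ t)
    (d : ℝ) (hd : d = (t / τ) ^ (1/α)) :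
    ∫ k in (1:ℝ)..d, k ^ (-α) * (1 - k ^ (-α)) ^ t
      = (1/α) * t ^ (1/α - 1) * ∫ z in τ..t, z ^ (-(1/α)) * (1 - z/t) ^ t := by
  have ht0 : 0 < t := lt_of_lt_of_le hτ ht
  set φ : ℝ → ℝ := fun z => t ^ (1/α) * z ^ (-(1/α)) with hφ
  set φ' : ℝ → ℝ := fun z => t ^ (1/α) * (-(1/α) * z ^ (-(1/α) - 1)) with hφ'
  set g : ℝ → ℝ := fun k => k ^ (-α) * (1 - k ^ (-α)) ^ t with hg
  have huIcc : uIcc t τ = Icc τ t := uIcc_of_ge ht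
  have hsub : uIcc t τ ⊆ Ioi (0:ℝ) := by
    rw [huIcc]; intro z hz; exact lt_of_lt_of_le hτ hz.1
  have hderiv : ∀ z ∈ uIcc t τ, HasDerivAt φ (φ' z) z := by
    intro z hz
    have hz0 : z ≠ 0 := ne_of_gt (hsub hz)
    exact ((Real.hasDerivAt_rpow_const (Or.inl hz0)).const_mul _)
  have hφ'cont : ContinuousOn φ' (uIcc t τ) := by
    apply continuousOn_const.mul
    apply continuousOn_const.mul
    intro z hz
    exact ((Real.continuousAt_rpow_const z _ (Or.inl (ne_of_gt (hsub hz)))).continuousWithinAt)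
  have himg : φ '' (uIcc t τ) ⊆ Ioi (0:ℝ) := by
    rintro _ ⟨z, hz, rfl⟩
    exact mul_pos (rpow_pos_of_pos ht0 _) (rpow_pos_of_pos (hsub hz) _)
  have hgcont : ContinuousOn g (φ '' uIcc t τ) := by
    apply ContinuousOn.mono _ himg
    intro k hk
    have hk0 : (k:ℝ) ≠ 0 := ne_of_gt hk
    apply ContinuousWithinAt.mul
    · exact (Real.continuousAt_rpow_const k _ (Or.inl hk0)).continuousWithinAt
    · apply ContinuousAt.continuousWithinAt
      apply ContinuousAt.comp (g := fun b : ℝ => b ^ t)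
      · exact Real.continuousAt_rpow_const _ _ (Or.inr ht0.le)
      · exact continuousAt_const.sub (Real.continuousAt_rpow_const k _ (Or.inl hk0))
  have key := intervalIntegral.integral_comp_smul_deriv' hderiv hφ'cont hgcont
  have hφt : φ t = 1 := by
    rw [hφ]; simp only
    rw [← Real.rpow_add ht0]
    simp
  have hφτ : φ τ = d := by
    rw [hφ, hd]; simp only
    rw [Real.div_rpow ht0.le hτ.le, Real.rpow_neg hτ.le, div_eq_mul_inv]
    ring
  rw [hφt, hφτ] at key
  rw [← key, intervalIntegral.integral_symm τ t, ← intervalIntegral.integral_const_mul,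
    ← intervalIntegral.integral_neg]
  apply intervalIntegral.integral_congr
  intro z hz
  have hz0 : 0 < z := hsub (by rwa [uIcc_comm] at hz)
  simp only [smul_eq_mul, Function.comp, hφ, hφ', hg]
  have hbase : (t ^ (1/α) * z ^ (-(1/α))) ^ (-α) = z / t := by
    rw [Real.mul_rpow (rpow_pos_of_pos ht0 _).le (rpow_pos_of_pos hz0 _).le,
      ← Real.rpow_mul ht0.le, ← Real.rpow_mul hz0.le]
    have e1 : 1/α * (-α) = -1 := by field_simp
    have e2 : -(1/α) * (-α) = 1 := by field_simp
    rw [e1, e2, Real.rpow_neg_one, Real.rpow_one]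
    ring
  rw [hbase]
  have hz1 : z ^ (-(1/α) - 1) * z = z ^ (-(1/α)) := by
    rw [← Real.rpow_add_one hz0.ne']
    ring_nf
  have ht1 : t ^ (1/α - 1) = t ^ (1/α) / t := by
    rw [Real.rpow_sub ht0, Real.rpow_one]
  rw [ht1, ← hz1]
  field_simp

lemma Jtend (α τ : ℝ) (hα0 : 0 < α) (hτ : 0 < τ) (t : ℕ → ℝ)
    (htt : Tendsto t atTop atTop) :
    Tendsto (fun d : ℕ => ∫ z in τ..t d, z ^ (-(1/α)) * (1 - z / t d) ^ (t d)) atTop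
      (𝓝 (∫ z in Ioi τ, z ^ (-(1/α)) * Real.exp (-z))) := by
  set μ := volume.restrict (Ioi τ) with hμ
  set F : ℕ → ℝ → ℝ := fun d => indicator (Ioc τ (t d))
    (fun z => z ^ (-(1/α)) * (1 - z / t d) ^ (t d)) with hF
  have hev : ∀ᶠ d in atTop, τ ≤ t d := htt.eventually_ge_atTop τ
  have hF_meas : ∀ᶠ d in atTop, AEStronglyMeasurable (F d) μ := by
    filter_upwards [hev] with d htd
    have htd0 : 0 < t d := lt_of_lt_of_le hτ htd
    have hcont : ContinuousOn (fun z : ℝ => z ^ (-(1/α)) * (1 - z / t d) ^ (t d)) (Ioi τ) := by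
      intro z hz
      have hz0 : z ≠ 0 := ne_of_gt (lt_trans hτ hz)
      apply ContinuousWithinAt.mul
      · exact (Real.continuousAt_rpow_const z _ (Or.inl hz0)).continuousWithinAt
      · apply ContinuousAt.continuousWithinAt
        apply ContinuousAt.comp (g := fun b : ℝ => b ^ (t d))
        · exact Real.continuousAt_rpow_const _ _ (Or.inr htd0.le)
        · exact continuousAt_const.sub (continuousAt_id.div_const _)
    exact (hcont.aestronglyMeasurable measurableSet_Ioi).indicator measurableSet_Ioc
  have h_bound : ∀ᶠ d in atTop, ∀ᵐ z ∂μ, ‖F d z‖ ≤ τ ^ (-(1/α)) * Real.exp (-z) := by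
    filter_upwards [hev] with d htd
    apply ae_of_all
    intro z
    have htd0 : 0 < t d := lt_of_lt_of_le hτ htd
    by_cases hz : z ∈ Ioc τ (t d)
    · rw [hF]
      simp only [indicator_of_mem hz]
      have hz0 : 0 < z := lt_trans hτ hz.1
      have hb0 : (0:ℝ) ≤ 1 - z / t d := by
        rw [sub_nonneg, div_le_one htd0]; exact hz.2
      have hnn : 0 ≤ z ^ (-(1/α)) * (1 - z / t d) ^ (t d) :=
        mul_nonneg (rpow_nonneg hz0.le _) (rpow_nonneg hb0 _)
      rw [Real.norm_eq_abs, abs_of_nonneg hnn]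
      apply mul_le_mul
      · exact Real.rpow_le_rpow_of_nonpos hτ hz.1.le (neg_nonpos.mpr (by positivity))
      · calc (1 - z / t d) ^ (t d) ≤ (Real.exp (-(z / t d))) ^ (t d) := by
              apply Real.rpow_le_rpow hb0 _ htd0.le
              have := Real.add_one_le_exp (-(z / t d)); linarith
          _ = Real.exp (-(z / t d) * t d) := (Real.exp_mul _ _).symm
          _ = Real.exp (-z) := by congr 1; field_simp
      · exact rpow_nonneg hb0 _
      · exact rpow_nonneg hτ.le _
    · rw [hF]
      simp only [indicator_of_notMem hz]
      rw [norm_zero]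
      positivity
  have bound_int : Integrable (fun z => τ ^ (-(1/α)) * Real.exp (-z)) μ := by
    apply Integrable.const_mul
    have := exp_neg_integrableOn_Ioi τ (b := 1) one_pos
    simp only [neg_mul, one_mul] at this
    exact this
  have h_lim : ∀ᵐ z ∂μ, Tendsto (fun d => F d z) atTop
      (𝓝 (z ^ (-(1/α)) * Real.exp (-z))) := by
    rw [hμ, ae_restrict_iff' measurableSet_Ioi]
    apply ae_of_all
    intro z hz
    have h1 : Tendsto (fun d => (1 - z / t d) ^ (t d)) atTop (𝓝 (Real.exp (-z))) := by
      have h2 := (tendsto_one_add_div_rpow_exp (-z)).comp htt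
      apply h2.congr
      intro d
      simp only [Function.comp]
      rw [neg_div, ← sub_eq_add_neg]
    refine Tendsto.congr' ?_ (h1.const_mul (z ^ (-(1/α))))
    filter_upwards [htt.eventually_ge_atTop z] with d hdz
    rw [hF]
    simp only [indicator_of_mem (mem_Ioc.mpr ⟨hz, hdz⟩)]
  have main := tendsto_integral_filter_of_dominated_convergence _ hF_meas h_bound bound_int h_lim
  apply main.congr'
  filter_upwards [hev] with d htd
  rw [hF, hμ]
  rw [integral_indicator measurableSet_Ioc, Measure.restrict_restrict measurableSet_Ioc,
    inter_eq_self_of_subset_left Ioc_subset_Ioi_self,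
    intervalIntegral.integral_of_le htd]

lemma sumIcc (f : ℕ → ℝ) (d : ℕ) :
    ∑ k ∈ Finset.Icc 1 d, f k = ∑ i ∈ Finset.range d, f (i + 1) := by
  rw [← Finset.Ico_add_one_right_eq_Icc, Finset.sum_Ico_eq_sum_range]
  simp [add_comm]

lemma Hsum (α : ℝ) (hα0 : 0 < α) (hα1 : α < 1) :
    Tendsto (fun d : ℕ => (∑ k ∈ Finset.Icc 1 d, (k:ℝ) ^ (-α)) / (d:ℝ) ^ (1-α)) atTop
      (𝓝 (1/(1-α))) := by
  have hp : 0 < 1 - α := by linarith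
  have hanti : ∀ a : ℕ, AntitoneOn (fun x : ℝ => x ^ (-α)) (Icc (1:ℝ) (1 + a)) := by
    intro a x hx y hy hxy
    exact Real.rpow_le_rpow_of_nonpos (lt_of_lt_of_le one_pos hx.1) hxy
      (neg_nonpos.mpr hα0.le)
  have hint : ∀ c : ℝ, 1 ≤ c → ∫ x in (1:ℝ)..c, x ^ (-α) = (c ^ (1-α) - 1)/(1-α) := by
    intro c hc
    rw [integral_rpow (Or.inl (by linarith : (-1:ℝ) < -α))]
    norm_num
    rw [show -α + 1 = 1 - α by ring]
  have hlow : ∀ d : ℕ, (((1:ℝ)+d) ^ (1-α) - 1)/(1-α) ≤ ∑ k ∈ Finset.Icc 1 d, (k:ℝ) ^ (-α) := by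
    intro d
    have h := (hanti d).integral_le_sum
    rw [hint (1 + d) (by simp [Nat.cast_nonneg])] at h
    refine le_trans ?_ (le_trans h (le_of_eq ?_))
    · norm_num
    · rw [sumIcc (fun k => (k:ℝ) ^ (-α)) d]
      apply Finset.sum_congr rfl
      intro i _
      congr 1
      push_cast
      ring
  have hup : ∀ d : ℕ, 1 ≤ d →
      ∑ k ∈ Finset.Icc 1 d, (k:ℝ) ^ (-α) ≤ 1 + ((d:ℝ) ^ (1-α) - 1)/(1-α) := by
    intro d hd
    have h := (hanti (d-1)).sum_le_integral
    have hcast : (1:ℝ) + ((d-1 : ℕ):ℝ) = d := by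
      rw [Nat.cast_sub hd]; push_cast; ring
    rw [hcast, hint d (by exact_mod_cast hd)] at h
    rw [sumIcc (fun k => (k:ℝ) ^ (-α)) d]
    rw [← Nat.succ_pred_eq_of_pos hd, Finset.sum_range_succ']
    have he : ∀ i ∈ Finset.range (d-1), ((i + 1 + 1 : ℕ):ℝ) ^ (-α)
        = (fun x : ℝ => x ^ (-α)) (1 + ((i + 1 : ℕ):ℝ)) := by
      intro i _
      congr 1
      push_cast
      ring
    rw [Nat.succ_pred_eq_of_pos hd, Nat.pred_eq_sub_one]
    rw [Finset.sum_congr rfl he]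
    simp only [Nat.cast_zero, Nat.cast_one, Real.one_rpow, zero_add]
    linarith [h]
  -- limits of the two bounds
  have hB : Tendsto (fun d : ℕ => (((d:ℝ) ^ (1-α))⁻¹)) atTop (𝓝 0) :=
    ((tendsto_rpow_atTop hp).comp tendsto_natCast_atTop_atTop).inv_tendsto_atTop
  have hA : Tendsto (fun d : ℕ => ((1 + (d:ℝ))/d) ^ (1-α)) atTop (𝓝 1) := by
    have h1 : Tendsto (fun d : ℕ => (1 + (d:ℝ))/d) atTop (𝓝 1) := by
      have h2 : Tendsto (fun d : ℕ => 1/(d:ℝ) + 1) atTop (𝓝 1) := by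
        have := tendsto_one_div_atTop_nhds_zero_nat.add_const (1:ℝ)
        simpa using this
      apply h2.congr'
      filter_upwards [eventually_ge_atTop 1] with d hd
      have hd0 : (d:ℝ) ≠ 0 := Nat.cast_ne_zero.mpr (by omega)
      field_simp
    have h3 := ((Real.continuousAt_rpow_const 1 (1-α) (Or.inl one_ne_zero)).tendsto).comp h1
    simpa [Function.comp_def] using h3
  have hL : Tendsto (fun d : ℕ => ((((1:ℝ)+d) ^ (1-α) - 1)/(1-α)) / (d:ℝ) ^ (1-α)) atTop
      (𝓝 (1/(1-α))) := by
    have hcomb := (hA.sub hB).div_const (1-α)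
    rw [sub_zero] at hcomb
    apply hcomb.congr'
    filter_upwards [eventually_ge_atTop 1] with d hd
    have hd0 : (0:ℝ) < d := by exact_mod_cast Nat.pos_of_ne_zero (by omega)
    have hdp : (0:ℝ) < (d:ℝ) ^ (1-α) := rpow_pos_of_pos hd0 _
    rw [Real.div_rpow (by positivity) hd0.le, inv_eq_one_div, div_sub_div_same,
      div_right_comm]
  have hU : Tendsto (fun d : ℕ => (1 + ((d:ℝ) ^ (1-α) - 1)/(1-α)) / (d:ℝ) ^ (1-α)) atTop
      (𝓝 (1/(1-α))) := by
    have hcomb : Tendsto (fun d : ℕ => (1 - 1/(1-α)) * (((d:ℝ) ^ (1-α))⁻¹) + 1/(1-α)) atTop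
        (𝓝 (1/(1-α))) := by
      have := (hB.const_mul (1 - 1/(1-α))).add_const (1/(1-α))
      simpa using this
    apply hcomb.congr'
    filter_upwards [eventually_ge_atTop 1] with d hd
    have hd0 : (0:ℝ) < d := by exact_mod_cast Nat.pos_of_ne_zero (by omega)
    have hdp : (0:ℝ) < (d:ℝ) ^ (1-α) := rpow_pos_of_pos hd0 _
    field_simp
    ring
  apply tendsto_of_tendsto_of_tendsto_of_le_of_le' hL hU
  · filter_upwards [eventually_ge_atTop 1] with d hd
    have hd0 : (0:ℝ) < d := by exact_mod_cast Nat.pos_of_ne_zero (by omega)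
    have hdp : (0:ℝ) < (d:ℝ) ^ (1-α) := rpow_pos_of_pos hd0 _
    gcongr
    exact hlow d
  · filter_upwards [eventually_ge_atTop 1] with d hd
    have hd0 : (0:ℝ) < d := by exact_mod_cast Nat.pos_of_ne_zero (by omega)
    have hdp : (0:ℝ) < (d:ℝ) ^ (1-α) := rpow_pos_of_pos hd0 _
    gcongr
    exact hup d hd

theorem stmt4 (α τ : ℝ) (hα0 : 0 < α) (hα1 : α < 1) (hτ : 0 < τ) :
    Tendsto
      (fun d : ℕ =>
        (∫ k in (1 : ℝ)..(d : ℝ), k ^ (-α) * (1 - k ^ (-α)) ^ (τ * (d : ℝ) ^ α)) /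
        (∑ k ∈ Finset.Icc 1 d, (k : ℝ) ^ (-α)))
      atTop
      (nhds (((1 - α) / α) * τ ^ (1 / α - 1) *
        ∫ z in Set.Ioi τ, z ^ (-(1 / α)) * Real.exp (-z))) := by
  have hα1' : (1:ℝ) - α ≠ 0 := by linarith
  set E := ∫ z in Set.Ioi τ, z ^ (-(1/α)) * Real.exp (-z) with hE
  have htt : Tendsto (fun d : ℕ => τ * (d:ℝ) ^ α) atTop atTop :=
    Tendsto.const_mul_atTop hτ ((tendsto_rpow_atTop hα0).comp tendsto_natCast_atTop_atTop)
  have hJ := Jtend α τ hα0 hτ _ htt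
  have hH := Hsum α hα0 hα1
  have hD : Tendsto (fun d : ℕ => ((d:ℝ) ^ (1-α)) / (∑ k ∈ Finset.Icc 1 d, (k:ℝ) ^ (-α)))
      atTop (𝓝 (1-α)) := by
    have h1 := hH.inv₀ (one_div_ne_zero hα1')
    rw [one_div, inv_inv] at h1
    apply h1.congr
    intro d
    rw [inv_div]
  have hmain := (hJ.const_mul ((1/α) * τ ^ (1/α - 1))).mul hD
  rw [show (1/α) * τ ^ (1/α - 1) * E * (1-α) = ((1-α)/α) * τ ^ (1/α - 1) * E by ring] at hmain
  apply hmain.congr'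
  filter_upwards [eventually_ge_atTop 1] with d hd
  have hd0 : (0:ℝ) < d := by exact_mod_cast Nat.pos_of_ne_zero (by omega)
  have hdα : (1:ℝ) ≤ (d:ℝ) ^ α := by
    calc (1:ℝ) = 1 ^ α := (Real.one_rpow α).symm
    _ ≤ (d:ℝ) ^ α := Real.rpow_le_rpow zero_le_one (by exact_mod_cast hd) hα0.le
  have htle : τ ≤ τ * (d:ℝ) ^ α := by nlinarith
  have hdeq : (d:ℝ) = ((τ * (d:ℝ) ^ α) / τ) ^ (1/α) := by
    rw [mul_comm, mul_div_assoc, div_self hτ.ne', mul_one, ← Real.rpow_mul hd0.le]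
    rw [show α * (1/α) = 1 by field_simp, Real.rpow_one]
  have hcov := cov α τ hα0 hα1 hτ (τ * (d:ℝ) ^ α) htle (d:ℝ) hdeq
  rw [hcov]
  have hexp : (τ * (d:ℝ) ^ α) ^ (1/α - 1) = τ ^ (1/α - 1) * (d:ℝ) ^ (1-α) := by
    rw [Real.mul_rpow hτ.le (Real.rpow_nonneg hd0.le _), ← Real.rpow_mul hd0.le]
    rw [show α * (1/α - 1) = 1 - α by field_simp]
  rw [hexp]
  ring
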